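/- arXiv:2502.03006 — 2 statements merged into one kernel-verified Lean document; each statement's English description precedes it below -/
import Mathlib

section
/- Let h > 0, t1 = t0 + h. Assume ∇ℓ is Lipschitz with constant c_l > 0 and bounded by B > 0 in Frobenius norm. Let U0, U1 ∈ ℝ^{m×r} and V0 ∈ ℝ^{n×r} have orthonormal columns, S0 ∈ ℝ^{r×r}, and set K0 = U0 S0. Let K : [t0,t1] → ℝ^{m×r} satisfy K'(t) = −∇ℓ(K(t)V0ᵀ)V0 with K(t0) = K0, and let S̃ : [t0,t1] → ℝ^{r×r} satisfy S̃'(t) = +U1ᵀ∇ℓ(U1 S̃(t)V0ᵀ)V0 with U1 S̃(t0) = K(t1). Then the PSI coefficient update S̃1 := S̃(t1) and the backward-corrected update S̄1 := U1ᵀ K0 satisfy ‖S̃1 − S̄1‖ ≤ 2 c_l B h². -/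
open Matrix Set MeasureTheory Filter

attribute [local instance] Matrix.frobeniusNormedAddCommGroup Matrix.frobeniusNormedSpace

lemma frob_sq {m n : ℕ} (A : Matrix (Fin m) (Fin n) ℝ) :
    ‖A‖ ^ 2 = (Aᵀ * A).trace := by
  rw [Matrix.frobenius_norm_def, ← Real.rpow_natCast _ 2, ← Real.rpow_mul (by positivity)]
  norm_num
  rw [Matrix.trace, Finset.sum_comm]
  simp [Matrix.diag, Matrix.mul_apply, Real.rpow_two, sq_abs, mul_comm, sq]

lemma frob_mul_orth_right {a b r : ℕ} (A : Matrix (Fin a) (Fin b) ℝ)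
    (V : Matrix (Fin b) (Fin r) ℝ) (hV : Vᵀ * V = 1) : ‖A * V‖ ≤ ‖A‖ := by
  set M := Aᵀ * A with hM
  set P := V * Vᵀ with hP
  have hPP : P * P = P := by
    rw [hP, Matrix.mul_assoc, ← Matrix.mul_assoc Vᵀ V Vᵀ, hV, Matrix.one_mul]
  have e1 : ‖A * V‖ ^ 2 = (M * P).trace := by
    rw [frob_sq, Matrix.transpose_mul, Matrix.mul_assoc, ← Matrix.mul_assoc Aᵀ A V,
      ← hM, Matrix.trace_mul_cycle, Matrix.trace_mul_comm, hP, hM]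
    rw [Matrix.mul_assoc (Aᵀ * A) V Vᵀ, Matrix.trace_mul_comm, ← Matrix.mul_assoc (V * Vᵀ) Aᵀ A]
  have e2 : ‖A * (1 - P)‖ ^ 2 = (M).trace - (M * P).trace := by
    rw [frob_sq, Matrix.transpose_mul]
    have h1 : (1 - P)ᵀ = 1 - P := by
      rw [hP, Matrix.transpose_sub, Matrix.transpose_one, Matrix.transpose_mul,
        Matrix.transpose_transpose]
    rw [h1, Matrix.mul_assoc, ← Matrix.mul_assoc Aᵀ A (1 - P), ← hM]
    rw [Matrix.mul_sub M, Matrix.mul_one, Matrix.sub_mul, Matrix.one_mul, Matrix.mul_sub P]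
    have hc : (P * (M * P)).trace = (M * P).trace := by
      rw [← Matrix.mul_assoc, Matrix.trace_mul_cycle, hPP, Matrix.trace_mul_comm]
    have hd : (P * M).trace = (M * P).trace := Matrix.trace_mul_comm P M
    simp only [Matrix.trace_sub, hc, hd]
    ring
  have key : ‖A * V‖ ^ 2 + ‖A * (1 - P)‖ ^ 2 = ‖A‖ ^ 2 := by
    rw [e1, e2, frob_sq, ← hM]; ring
  nlinarith [norm_nonneg (A * V), norm_nonneg A, sq_nonneg ‖A * (1 - P)‖]

lemma frob_mul_orth_left {a b r : ℕ} (U : Matrix (Fin a) (Fin r) ℝ)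
    (hU : Uᵀ * U = 1) (B : Matrix (Fin a) (Fin b) ℝ) : ‖Uᵀ * B‖ ≤ ‖B‖ := by
  rw [← Matrix.frobenius_norm_transpose, Matrix.transpose_mul, Matrix.transpose_transpose,
    ← Matrix.frobenius_norm_transpose B]
  exact frob_mul_orth_right Bᵀ U hU

lemma frob_mul_orth_left_eq {a b r : ℕ} (U : Matrix (Fin a) (Fin r) ℝ)
    (hU : Uᵀ * U = 1) (X : Matrix (Fin r) (Fin b) ℝ) : ‖U * X‖ = ‖X‖ := by
  have h : ‖U * X‖ ^ 2 = ‖X‖ ^ 2 := by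
    rw [frob_sq, frob_sq, Matrix.transpose_mul, Matrix.mul_assoc, ← Matrix.mul_assoc Uᵀ U X,
      hU, Matrix.one_mul]
  have h1 := norm_nonneg (U * X); have h2 := norm_nonneg X
  nlinarith

lemma frob_mul_orth_right_eq {a b r : ℕ} (X : Matrix (Fin a) (Fin r) ℝ)
    (V : Matrix (Fin b) (Fin r) ℝ) (hV : Vᵀ * V = 1) : ‖X * Vᵀ‖ = ‖X‖ := by
  rw [← Matrix.frobenius_norm_transpose, Matrix.transpose_mul, Matrix.transpose_transpose,
    ← Matrix.frobenius_norm_transpose X]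
  exact frob_mul_orth_left_eq V hV Xᵀ

lemma hasDerivAt_const_mul' {a b c : ℕ} (M : Matrix (Fin a) (Fin b) ℝ)
    {f : ℝ → Matrix (Fin b) (Fin c) ℝ} {f' : Matrix (Fin b) (Fin c) ℝ} {t : ℝ}
    (hf : HasDerivAt f f' t) : HasDerivAt (fun s => M * f s) (M * f') t := by
  have h2 := (LinearMap.toContinuousLinearMap
      { toFun := fun X => M * X
        map_add' := fun x y => Matrix.mul_add M x y
        map_smul' := fun c x => (Matrix.mul_smul M c x) :
        Matrix (Fin b) (Fin c) ℝ →ₗ[ℝ] Matrix (Fin a) (Fin c) ℝ }).hasFDerivAt.comp_hasDerivAt t hf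
  exact h2

/-- The continuous linear functional `H ↦ ⟨G, H⟩ = tr(Gᵀ H)`, i.e. pairing with `G` in the
Frobenius inner product.  `hgrad : ∀ Y, HasFDerivAt ℓ (frobCLM (G Y)) Y` then states that
`G Y` is the gradient of `ℓ` at `Y` with respect to the Frobenius inner product. -/
noncomputable def frobCLM {m n : ℕ} (G : Matrix (Fin m) (Fin n) ℝ) :
    Matrix (Fin m) (Fin n) ℝ →L[ℝ] ℝ :=
  LinearMap.toContinuousLinearMap
    { toFun := fun H => (Gᵀ * H).trace
      map_add' := by intro x y; simp [Matrix.mul_add]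
      map_smul' := by intro c x; simp [Matrix.mul_smul] }

/-- the PSI coefficient update `S̃1 = S̃(t1)` and the backward-corrected update
`S̄1 = U1ᵀ K0 = U1ᵀ U0 S0` differ by at most `2 c_l B h²`. -/
theorem psi_bcpsi_sstep_deviation {m n r : ℕ}
    (ℓ : Matrix (Fin m) (Fin n) ℝ → ℝ)
    (G : Matrix (Fin m) (Fin n) ℝ → Matrix (Fin m) (Fin n) ℝ)
    (hgrad : ∀ Y, HasFDerivAt ℓ (frobCLM (G Y)) Y)
    (cl B : ℝ) (hcl : 0 < cl) (hB : 0 < B)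
    (hlip : ∀ Z1 Z2, ‖G Z1 - G Z2‖ ≤ cl * ‖Z1 - Z2‖)
    (hbound : ∀ Z, ‖G Z‖ ≤ B)
    (t0 t1 h : ℝ) (hh : 0 < h) (ht1 : t1 = t0 + h)
    (U0 : Matrix (Fin m) (Fin r) ℝ) (hU0 : U0ᵀ * U0 = 1)
    (U1 : Matrix (Fin m) (Fin r) ℝ) (hU1 : U1ᵀ * U1 = 1)
    (V0 : Matrix (Fin n) (Fin r) ℝ) (hV0 : V0ᵀ * V0 = 1)
    (S0 : Matrix (Fin r) (Fin r) ℝ)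
    (K : ℝ → Matrix (Fin m) (Fin r) ℝ)
    (hK : ∀ t ∈ Set.Icc t0 t1, HasDerivAt K (-(G (K t * V0ᵀ) * V0)) t)
    (hK0 : K t0 = U0 * S0)
    (S : ℝ → Matrix (Fin r) (Fin r) ℝ)
    (hS : ∀ t ∈ Set.Icc t0 t1, HasDerivAt S (U1ᵀ * G (U1 * S t * V0ᵀ) * V0) t)
    (hS0 : U1 * S t0 = K t1) :
    ‖S t1 - U1ᵀ * (U0 * S0)‖ ≤ 2 * cl * B * h ^ 2 := by
  have ht0le : t0 ≤ t1 := by linarith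
  have hmem1 : t1 ∈ Set.Icc t0 t1 := ⟨ht0le, le_refl t1⟩
  -- bound on S'
  have hSbound : ∀ t, ‖U1ᵀ * G (U1 * S t * V0ᵀ) * V0‖ ≤ B := by
    intro t
    calc ‖U1ᵀ * G (U1 * S t * V0ᵀ) * V0‖ ≤ ‖U1ᵀ * G (U1 * S t * V0ᵀ)‖ :=
          frob_mul_orth_right _ V0 hV0
      _ ≤ ‖G (U1 * S t * V0ᵀ)‖ := frob_mul_orth_left U1 hU1 _
      _ ≤ B := hbound _
  have hKbound : ∀ t, ‖-(G (K t * V0ᵀ) * V0)‖ ≤ B := by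
    intro t
    rw [norm_neg]
    exact le_trans (frob_mul_orth_right _ V0 hV0) (hbound _)
  -- distance bounds
  have hSdist : ∀ t ∈ Set.Icc t0 t1, ‖S t - S t0‖ ≤ B * (t - t0) :=
    norm_image_sub_le_of_norm_deriv_le_segment'
      (fun x hx => (hS x hx).hasDerivWithinAt)
      (fun x _ => hSbound x)
  have hKdist : ∀ t ∈ Set.Icc t0 t1, ‖K t1 - K t‖ ≤ B * (t1 - t) := by
    intro t ht
    have hsub : Set.Icc t t1 ⊆ Set.Icc t0 t1 := Set.Icc_subset_Icc ht.1 le_rfl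
    exact norm_image_sub_le_of_norm_deriv_le_segment'
      (f' := fun x => -(G (K x * V0ᵀ) * V0))
      (fun x hx => (hK x (hsub hx)).hasDerivWithinAt)
      (fun x _ => hKbound x) t1 (Set.right_mem_Icc.2 ht.2)
  -- S t0 = U1ᵀ K t1
  have hS0' : S t0 = U1ᵀ * K t1 := by
    rw [← hS0, ← Matrix.mul_assoc, hU1, Matrix.one_mul]
  -- the function E
  set E : ℝ → Matrix (Fin r) (Fin r) ℝ :=
    fun t => S t - S t0 + (U1ᵀ * K t - U1ᵀ * K t0) with hE
  set E' : ℝ → Matrix (Fin r) (Fin r) ℝ :=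
    fun t => U1ᵀ * G (U1 * S t * V0ᵀ) * V0 + U1ᵀ * -(G (K t * V0ᵀ) * V0) with hE'
  have hEderiv : ∀ t ∈ Set.Icc t0 t1, HasDerivAt E (E' t) t := by
    intro t ht
    exact ((hS t ht).sub_const (S t0)).add
      ((hasDerivAt_const_mul' U1ᵀ (hK t ht)).sub_const (U1ᵀ * K t0))
  have hE'bound : ∀ t ∈ Set.Icc t0 t1, ‖E' t‖ ≤ cl * B * h := by
    intro t ht
    have e1 : E' t = U1ᵀ * (G (U1 * S t * V0ᵀ) - G (K t * V0ᵀ)) * V0 := by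
      simp only [hE', Matrix.mul_sub, Matrix.sub_mul, Matrix.mul_neg, sub_eq_add_neg,
        Matrix.neg_mul, Matrix.mul_assoc, Matrix.add_mul, Matrix.mul_add]
    have e2 : U1 * S t - K t = U1 * (S t - S t0) + (K t1 - K t) := by
      rw [Matrix.mul_sub, hS0]; abel
    have h3 : ‖U1 * S t - K t‖ ≤ B * (t - t0) + B * (t1 - t) := by
      rw [e2]
      calc ‖U1 * (S t - S t0) + (K t1 - K t)‖
          ≤ ‖U1 * (S t - S t0)‖ + ‖K t1 - K t‖ := norm_add_le _ _
        _ = ‖S t - S t0‖ + ‖K t1 - K t‖ := by rw [frob_mul_orth_left_eq U1 hU1]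
        _ ≤ B * (t - t0) + B * (t1 - t) := add_le_add (hSdist t ht) (hKdist t ht)
    have h4 : ‖G (U1 * S t * V0ᵀ) - G (K t * V0ᵀ)‖ ≤ cl * (B * (t - t0) + B * (t1 - t)) := by
      calc ‖G (U1 * S t * V0ᵀ) - G (K t * V0ᵀ)‖
          ≤ cl * ‖U1 * S t * V0ᵀ - K t * V0ᵀ‖ := hlip _ _
        _ = cl * ‖(U1 * S t - K t) * V0ᵀ‖ := by rw [Matrix.sub_mul]
        _ = cl * ‖U1 * S t - K t‖ := by rw [frob_mul_orth_right_eq _ V0 hV0]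
        _ ≤ cl * (B * (t - t0) + B * (t1 - t)) := by
            exact mul_le_mul_of_nonneg_left h3 hcl.le
    have h5 : ‖E' t‖ ≤ ‖G (U1 * S t * V0ᵀ) - G (K t * V0ᵀ)‖ := by
      rw [e1]
      exact le_trans (frob_mul_orth_right _ V0 hV0) (frob_mul_orth_left U1 hU1 _)
    have : B * (t - t0) + B * (t1 - t) = B * h := by rw [ht1]; ring
    calc ‖E' t‖ ≤ cl * (B * (t - t0) + B * (t1 - t)) := le_trans h5 h4
      _ = cl * B * h := by rw [this]; ring
  have hfinal := norm_image_sub_le_of_norm_deriv_le_segment'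
    (fun x hx => (hEderiv x hx).hasDerivWithinAt)
    (fun x hx => hE'bound x (Set.Ico_subset_Icc_self hx)) t1 hmem1
  have hEt0 : E t0 = 0 := by simp [hE]
  have hEt1 : E t1 = S t1 - U1ᵀ * (U0 * S0) := by
    rw [hE]; simp only; rw [hS0', hK0]; abel
  rw [hEt0, hEt1, sub_zero] at hfinal
  have : (cl * B * h) * (t1 - t0) = cl * B * h ^ 2 := by rw [ht1]; ring
  rw [this] at hfinal
  have hpos : 0 ≤ cl * B * h ^ 2 := by positivity
  linarith
end

section
/- (Loss descent of the abc-PSI.) Assume ∇ℓ is Lipschitz with constant c_l > 0 in Frobenius norm. Let Û1 ∈ ℝ^{m×q} have orthonormal columns, L0 ∈ ℝ^{n×q}, h > 0, and set Y0 = Û1 L0ᵀ, L1ᵀ = L0ᵀ − h Û1ᵀ ∇ℓ(Y0), and Ŷ1 = Û1 L1ᵀ. Then ℓ(Ŷ1) ≤ ℓ(Y0) − (1 − h c_l / 2) · h · ‖Û1 Û1ᵀ ∇ℓ(Y0)‖². In particular, if h ≤ 2/c_l, the loss does not increase. -/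
open Matrix Set MeasureTheory Filter

attribute [local instance] Matrix.frobeniusNormedAddCommGroup Matrix.frobeniusNormedSpace

lemma frobCLM_apply {m n : ℕ} (G H : Matrix (Fin m) (Fin n) ℝ) :
    frobCLM G H = (Gᵀ * H).trace := rfl

lemma frob_norm_sq {m n : ℕ} (A : Matrix (Fin m) (Fin n) ℝ) :
    ‖A‖ ^ 2 = ∑ i, ∑ j, (A i j) ^ 2 := by
  rw [Matrix.frobenius_norm_def]
  rw [← Real.rpow_natCast _ 2, ← Real.rpow_mul (by positivity)]
  norm_num

lemma frob_trace_eq {m n : ℕ} (A B : Matrix (Fin m) (Fin n) ℝ) :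
    (Aᵀ * B).trace = ∑ i, ∑ j, A i j * B i j := by
  rw [Matrix.trace, Finset.sum_comm]
  simp [Matrix.diag, Matrix.mul_apply, Matrix.transpose_apply]

lemma frob_cauchy {m n : ℕ} (A B : Matrix (Fin m) (Fin n) ℝ) :
    (Aᵀ * B).trace ≤ ‖A‖ * ‖B‖ := by
  rw [frob_trace_eq]
  have h1 : ∑ i, ∑ j, A i j * B i j
      = ∑ p : Fin m × Fin n, A p.1 p.2 * B p.1 p.2 := by
    rw [Fintype.sum_prod_type]
  have h2 := Real.sum_mul_le_sqrt_mul_sqrt Finset.univ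
      (fun p : Fin m × Fin n => A p.1 p.2) (fun p => B p.1 p.2)
  rw [h1]
  refine h2.trans_eq ?_
  have nA : ‖A‖ = Real.sqrt (∑ p : Fin m × Fin n, A p.1 p.2 ^ 2) := by
    rw [show (∑ p : Fin m × Fin n, A p.1 p.2 ^ 2) = ‖A‖^2 by
      rw [frob_norm_sq, Fintype.sum_prod_type]]
    exact (Real.sqrt_sq (norm_nonneg _)).symm
  have nB : ‖B‖ = Real.sqrt (∑ p : Fin m × Fin n, B p.1 p.2 ^ 2) := by
    rw [show (∑ p : Fin m × Fin n, B p.1 p.2 ^ 2) = ‖B‖^2 by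
      rw [frob_norm_sq, Fintype.sum_prod_type]]
    exact (Real.sqrt_sq (norm_nonneg _)).symm
  rw [nA, nB]

lemma frob_norm_sq_trace {m n : ℕ} (A : Matrix (Fin m) (Fin n) ℝ) :
    (Aᵀ * A).trace = ‖A‖ ^ 2 := by
  rw [frob_trace_eq, frob_norm_sq]
  simp [sq]

lemma descent_lemma {m n : ℕ}
    (ℓ : Matrix (Fin m) (Fin n) ℝ → ℝ)
    (G : Matrix (Fin m) (Fin n) ℝ → Matrix (Fin m) (Fin n) ℝ)
    (hgrad : ∀ Y, HasFDerivAt ℓ (frobCLM (G Y)) Y)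
    (cl : ℝ) (hcl : 0 < cl)
    (hlip : ∀ Z1 Z2, ‖G Z1 - G Z2‖ ≤ cl * ‖Z1 - Z2‖)
    (Y D : Matrix (Fin m) (Fin n) ℝ) :
    ℓ (Y + D) ≤ ℓ Y + ((G Y)ᵀ * D).trace + cl / 2 * ‖D‖ ^ 2 := by
  set g : ℝ → ℝ := fun t => ((G (Y + t • D))ᵀ * D).trace with hg
  have hderiv : ∀ t : ℝ, HasDerivAt (fun t : ℝ => ℓ (Y + t • D)) (g t) t := by
    intro t
    have h1 : HasDerivAt (fun t : ℝ => Y + t • D) D t := by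
      have := ((hasDerivAt_id' t).smul_const D).const_add Y
      rwa [one_smul] at this
    exact (hgrad (Y + t • D)).comp_hasDerivAt t h1
  -- g is Lipschitz, hence continuous
  have hgdiff : ∀ s t : ℝ, g t - g s ≤ cl * |t - s| * ‖D‖ ^ 2 := by
    intro s t
    have : g t - g s = ((G (Y + t • D) - G (Y + s • D))ᵀ * D).trace := by
      simp [hg, Matrix.transpose_sub, Matrix.sub_mul]
    rw [this]
    calc ((G (Y + t • D) - G (Y + s • D))ᵀ * D).trace
        ≤ ‖G (Y + t • D) - G (Y + s • D)‖ * ‖D‖ := frob_cauchy _ _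
      _ ≤ (cl * ‖(Y + t • D) - (Y + s • D)‖) * ‖D‖ := by
          apply mul_le_mul_of_nonneg_right (hlip _ _) (norm_nonneg _)
      _ = cl * |t - s| * ‖D‖ ^ 2 := by
          have : (Y + t • D) - (Y + s • D) = (t - s) • D := by
            rw [sub_smul]; abel
          rw [this, norm_smul, Real.norm_eq_abs]; ring
  have hgcont : Continuous g := by
    apply LipschitzWith.continuous (K := ⟨cl * ‖D‖ ^ 2, by positivity⟩)
    apply LipschitzWith.of_dist_le_mul
    intro t s
    rw [Real.dist_eq, Real.dist_eq]
    change |g t - g s| ≤ cl * ‖D‖ ^ 2 * |t - s|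
    rw [abs_sub_le_iff]
    have h1 := hgdiff s t
    have h2 := hgdiff t s
    have h3 : |s - t| = |t - s| := abs_sub_comm s t
    rw [h3] at h2
    have he : cl * |t - s| * ‖D‖ ^ 2 = cl * ‖D‖ ^ 2 * |t - s| := by ring
    constructor <;> linarith [h1, h2]
  have hint : IntervalIntegrable g volume 0 1 :=
    hgcont.intervalIntegrable 0 1
  have key : ℓ (Y + D) - ℓ Y = ∫ t in (0:ℝ)..1, g t := by
    have := intervalIntegral.integral_eq_sub_of_hasDerivAt
      (f := fun t : ℝ => ℓ (Y + t • D)) (f' := g)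
      (fun t _ => hderiv t) hint
    simpa using this.symm
  have hbound : ∀ t ∈ Set.Icc (0:ℝ) 1, g t ≤ g 0 + t * (cl * ‖D‖ ^ 2) := by
    intro t ht
    have := hgdiff 0 t
    rw [sub_zero, abs_of_nonneg ht.1] at this
    nlinarith [this]
  have hmono : (∫ t in (0:ℝ)..1, g t) ≤ ∫ t in (0:ℝ)..1, (g 0 + t * (cl * ‖D‖ ^ 2)) := by
    apply intervalIntegral.integral_mono_on (by norm_num) hint
    · exact (continuous_const.add (continuous_id.mul continuous_const)).intervalIntegrable 0 1
    · exact hbound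
  have hval : (∫ t in (0:ℝ)..1, (g 0 + t * (cl * ‖D‖ ^ 2))) = g 0 + cl / 2 * ‖D‖ ^ 2 := by
    have hi : IntervalIntegrable (fun t : ℝ => t * (cl * ‖D‖ ^ 2)) volume 0 1 :=
      (continuous_id.mul continuous_const).intervalIntegrable 0 1
    rw [intervalIntegral.integral_add intervalIntegrable_const hi,
      intervalIntegral.integral_const, intervalIntegral.integral_mul_const,
      integral_id]
    norm_num; ring
  have hg0 : g 0 = ((G Y)ᵀ * D).trace := by simp [hg]
  nlinarith [key, hmono, hval.symm ▸ hmono, hg0]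

/-- Loss descent of the abc-PSI: for the explicit-Euler abc-PSI update
`Ŷ1 = Û1 (L0ᵀ − h Û1ᵀ ∇ℓ(Y0))` with `Y0 = Û1 L0ᵀ`,
`ℓ(Ŷ1) ≤ ℓ(Y0) − (1 − h c_l/2) h ‖Û1 Û1ᵀ ∇ℓ(Y0)‖²`; in particular the loss does not
increase when `h ≤ 2/c_l`. -/
theorem abcpsi_loss_descent {m n q : ℕ}
    (ℓ : Matrix (Fin m) (Fin n) ℝ → ℝ)
    (G : Matrix (Fin m) (Fin n) ℝ → Matrix (Fin m) (Fin n) ℝ)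
    (hgrad : ∀ Y, HasFDerivAt ℓ (frobCLM (G Y)) Y)
    (cl : ℝ) (hcl : 0 < cl)
    (hlip : ∀ Z1 Z2, ‖G Z1 - G Z2‖ ≤ cl * ‖Z1 - Z2‖)
    (Uhat1 : Matrix (Fin m) (Fin q) ℝ) (hUhat1 : Uhat1ᵀ * Uhat1 = 1)
    (L0 : Matrix (Fin n) (Fin q) ℝ) (h : ℝ) (hh : 0 < h) :
    ℓ (Uhat1 * (L0ᵀ - h • (Uhat1ᵀ * G (Uhat1 * L0ᵀ)))) ≤
        ℓ (Uhat1 * L0ᵀ)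
          - (1 - h * cl / 2) * h * ‖Uhat1 * Uhat1ᵀ * G (Uhat1 * L0ᵀ)‖ ^ 2 ∧
    (h ≤ 2 / cl →
      ℓ (Uhat1 * (L0ᵀ - h • (Uhat1ᵀ * G (Uhat1 * L0ᵀ)))) ≤ ℓ (Uhat1 * L0ᵀ)) := by
  set Y0 := Uhat1 * L0ᵀ with hY0
  set G0 := G Y0 with hG0
  set P := Uhat1 * Uhat1ᵀ with hP
  set D : Matrix (Fin m) (Fin n) ℝ := (-h) • (P * G0) with hD
  have harg : Uhat1 * (L0ᵀ - h • (Uhat1ᵀ * G0)) = Y0 + D := by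
    rw [Matrix.mul_sub, Matrix.mul_smul, hD, hP, hY0]
    rw [neg_smul, Matrix.mul_assoc]
    abel
  have hPsymm : Pᵀ = P := by
    rw [hP, Matrix.transpose_mul, Matrix.transpose_transpose]
  have hPP : P * P = P := by
    rw [hP, Matrix.mul_assoc, ← Matrix.mul_assoc Uhat1ᵀ, hUhat1, Matrix.one_mul]
  have hPG : (G0ᵀ * (P * G0)).trace = ‖P * G0‖ ^ 2 := by
    rw [← frob_norm_sq_trace]
    have h1 : (P * G0)ᵀ = G0ᵀ * P := by rw [Matrix.transpose_mul, hPsymm]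
    have h2 : (P * G0)ᵀ * (P * G0) = G0ᵀ * (P * G0) := by
      rw [h1, Matrix.mul_assoc G0ᵀ P (P * G0), ← Matrix.mul_assoc P P G0, hPP]
    rw [h2]
  have hDtr : (G0ᵀ * D).trace = -h * ‖P * G0‖ ^ 2 := by
    rw [hD, Matrix.mul_smul, Matrix.trace_smul, hPG, smul_eq_mul]
  have hDnorm : ‖D‖ ^ 2 = h ^ 2 * ‖P * G0‖ ^ 2 := by
    rw [hD, norm_smul, Real.norm_eq_abs, abs_neg, abs_of_pos hh, mul_pow]
  have hdesc := descent_lemma ℓ G hgrad cl hcl hlip Y0 D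
  rw [hDtr, hDnorm] at hdesc
  rw [harg]
  constructor
  · nlinarith [hdesc]
  · intro h2
    have hc : h * cl ≤ 2 := by
      rw [le_div_iff₀ hcl] at h2; linarith
    nlinarith [hdesc, sq_nonneg ‖P * G0‖, mul_nonneg hh.le (sq_nonneg ‖P * G0‖)]
end
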